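/- Suppose the columns of X restricted to a nonempty index set A with |A| = a satisfy X_j^T X_j = n for all j ∈ A and |X_i^T X_j| ≤ n/(2a) for all i ≠ j in A. Then X_A^T X_A is invertible and its inverse M = (X_A^T X_A)^{-1} satisfies, for every l ∈ A: Σ_{k ≠ l} |M_{kl}| ≤ 1/n − 1/(n a) ≤ M_{ll} ≤ 1/n + 1/(n a). -/

import Mathlib

open scoped BigOperators

set_option maxHeartbeats 1000000 in
/-- Diagonal dominance of the inverse Gram matrix under mutual coherence.
If the columns of `X` indexed by a nonempty set `A` of cardinality `a` satisfy
`Xⱼᵀ Xⱼ = n` and `|Xᵢᵀ Xⱼ| ≤ n/(2a)` for `i ≠ j`, then the Gram matrix `X_Aᵀ X_A`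
is invertible and its inverse `M` satisfies, for every `l ∈ A`,
`∑_{k ≠ l} |M k l| ≤ 1/n − 1/(n a) ≤ M l l ≤ 1/n + 1/(n a)`. -/
theorem gram_inverse_entry_bounds (n p : ℕ) (hn : 0 < n)
    (X : Matrix (Fin n) (Fin p) ℝ) (A : Finset (Fin p)) (hA : A.Nonempty)
    (hnorm : ∀ j ∈ A, ∑ i, X i j * X i j = (n : ℝ))
    (hcoh : ∀ i ∈ A, ∀ j ∈ A, i ≠ j →
      |∑ k, X k i * X k j| ≤ (n : ℝ) / (2 * A.card)) :
    let G : Matrix A A ℝ := fun i j => ∑ k, X k i * X k j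
    IsUnit G ∧ ∀ l : A,
      (∑ k ∈ Finset.univ.erase l, |G⁻¹ k l|) ≤ 1 / n - 1 / (n * A.card) ∧
      1 / n - 1 / (n * A.card) ≤ G⁻¹ l l ∧
      G⁻¹ l l ≤ 1 / n + 1 / (n * A.card) := by
  intro G
  have hacard : 0 < A.card := Finset.card_pos.mpr hA
  set a : ℝ := (A.card : ℝ) with ha_def
  have ha1 : (1:ℝ) ≤ a := by rw [ha_def]; exact_mod_cast hacard
  have ha0 : (0:ℝ) < a := by linarith
  have hnR : (0:ℝ) < n := by exact_mod_cast hn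
  have hGdiag : ∀ j : A, G j j = (n:ℝ) := fun j => hnorm j j.2
  have hGoff : ∀ i j : A, i ≠ j → |G i j| ≤ (n:ℝ) / (2 * a) := fun i j hij =>
    hcoh i i.2 j j.2 (fun h => hij (Subtype.ext h))
  have hcardA : Fintype.card A = A.card := Fintype.card_coe A
  have hcarderase : ∀ l : A, ((Finset.univ.erase l).card : ℝ) = a - 1 := by
    intro l
    rw [Finset.card_erase_of_mem (Finset.mem_univ l), Finset.card_univ, hcardA]
    rw [Nat.cast_sub hacard]
    simp [ha_def]
  -- strict diagonal dominance
  have hrow : ∀ k : A, ∑ j ∈ Finset.univ.erase k, ‖G k j‖ < ‖G k k‖ := by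
    intro k
    have h1 : ∑ j ∈ Finset.univ.erase k, ‖G k j‖ ≤ (Finset.univ.erase k).card • ((n:ℝ)/(2*a)) := by
      apply Finset.sum_le_card_nsmul
      intro j hj
      rw [Real.norm_eq_abs]
      exact hGoff k j (Ne.symm (Finset.mem_erase.mp hj).1)
    rw [nsmul_eq_mul, hcarderase k] at h1
    have h2 : (a - 1) * ((n:ℝ)/(2*a)) < (n:ℝ) := by
      rw [mul_div_assoc']
      rw [div_lt_iff₀ (by linarith)]
      nlinarith
    rw [Real.norm_eq_abs, hGdiag k, abs_of_pos hnR]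
    linarith
  have hdet : G.det ≠ 0 := det_ne_zero_of_sum_row_lt_diag hrow
  have hdetU : IsUnit G.det := isUnit_iff_ne_zero.mpr hdet
  have hunit : IsUnit G := (Matrix.isUnit_iff_isUnit_det G).mpr hdetU
  have hGM : G * G⁻¹ = 1 := Matrix.mul_nonsing_inv G hdetU
  refine ⟨hunit, ?_⟩
  intro l
  have hEq : ∀ i : A, ∑ k, G i k * G⁻¹ k l = if i = l then (1:ℝ) else 0 := by
    intro i
    have h := congrFun (congrFun hGM i) l
    simpa [Matrix.mul_apply, Matrix.one_apply] using h
  set s : ℝ := ∑ k ∈ Finset.univ.erase l, |G⁻¹ k l| with hs_def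
  set d : ℝ := G⁻¹ l l with hd_def
  set D : ℝ := |d| with hD_def
  have hs0 : 0 ≤ s := Finset.sum_nonneg fun k _ => abs_nonneg _
  have hD0 : 0 ≤ D := abs_nonneg _
  have hT : ∑ k, |G⁻¹ k l| = D + s := by
    rw [← Finset.add_sum_erase _ _ (Finset.mem_univ l)]
  -- Fact 1
  have H1 : |(n:ℝ) * d - 1| ≤ (n:ℝ)/(2*a) * s := by
    have hl := hEq l
    rw [if_pos rfl, ← Finset.add_sum_erase _ _ (Finset.mem_univ l), hGdiag l] at hl
    have heq : (n:ℝ) * d - 1 = -(∑ k ∈ Finset.univ.erase l, G l k * G⁻¹ k l) := by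
      rw [hd_def]; linarith
    rw [heq, abs_neg]
    calc |∑ k ∈ Finset.univ.erase l, G l k * G⁻¹ k l|
        ≤ ∑ k ∈ Finset.univ.erase l, |G l k * G⁻¹ k l| := Finset.abs_sum_le_sum_abs _ _
      _ ≤ ∑ k ∈ Finset.univ.erase l, (n:ℝ)/(2*a) * |G⁻¹ k l| := by
          apply Finset.sum_le_sum
          intro k hk
          rw [abs_mul]
          exact mul_le_mul_of_nonneg_right
            (hGoff l k (Ne.symm (Finset.mem_erase.mp hk).1)) (abs_nonneg _)
      _ = (n:ℝ)/(2*a) * s := by rw [hs_def, Finset.mul_sum]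
  -- Fact 2 per row
  have H2row : ∀ i ∈ Finset.univ.erase l, (n:ℝ) * |G⁻¹ i l| ≤ (n:ℝ)/(2*a) * ((D + s) - |G⁻¹ i l|) := by
    intro i hi
    have hil : i ≠ l := (Finset.mem_erase.mp hi).1
    have hl := hEq i
    rw [if_neg hil, ← Finset.add_sum_erase _ _ (Finset.mem_univ i), hGdiag i] at hl
    have heq : (n:ℝ) * G⁻¹ i l = -(∑ k ∈ Finset.univ.erase i, G i k * G⁻¹ k l) := by linarith
    have h3 : (n:ℝ) * |G⁻¹ i l| = |∑ k ∈ Finset.univ.erase i, G i k * G⁻¹ k l| := by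
      rw [show (n:ℝ) = |(n:ℝ)| from (abs_of_pos hnR).symm, ← abs_mul, heq, abs_neg]
    rw [h3]
    calc |∑ k ∈ Finset.univ.erase i, G i k * G⁻¹ k l|
        ≤ ∑ k ∈ Finset.univ.erase i, |G i k * G⁻¹ k l| := Finset.abs_sum_le_sum_abs _ _
      _ ≤ ∑ k ∈ Finset.univ.erase i, (n:ℝ)/(2*a) * |G⁻¹ k l| := by
          apply Finset.sum_le_sum
          intro k hk
          rw [abs_mul]
          exact mul_le_mul_of_nonneg_right
            (hGoff i k (Ne.symm (Finset.mem_erase.mp hk).1)) (abs_nonneg _)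
      _ = (n:ℝ)/(2*a) * ((D + s) - |G⁻¹ i l|) := by
          rw [← Finset.mul_sum, Finset.sum_erase_eq_sub (Finset.mem_univ i), hT]
  -- summed Fact 2
  have H2 : (n:ℝ) * s ≤ (n:ℝ)/(2*a) * ((a-1)*(D+s) - s) := by
    calc (n:ℝ) * s = ∑ i ∈ Finset.univ.erase l, (n:ℝ) * |G⁻¹ i l| := by
          rw [hs_def, Finset.mul_sum]
      _ ≤ ∑ i ∈ Finset.univ.erase l, (n:ℝ)/(2*a) * ((D + s) - |G⁻¹ i l|) :=
          Finset.sum_le_sum H2row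
      _ = (n:ℝ)/(2*a) * ((a-1)*(D+s) - s) := by
          rw [← Finset.mul_sum]
          congr 1
          rw [Finset.sum_sub_distrib, Finset.sum_const, nsmul_eq_mul, hcarderase l, hs_def]
  -- clear denominators
  have hc2a : (0:ℝ) < 2*a := by linarith
  have H1u : 2*a*((n:ℝ)*d) ≤ 2*a + (n:ℝ)*s := by
    have := (abs_le.mp H1).2
    have h4 : 2*a*((n:ℝ)/(2*a)*s) = (n:ℝ)*s := by field_simp
    nlinarith
  have H1l : 2*a - (n:ℝ)*s ≤ 2*a*((n:ℝ)*d) := by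
    have := (abs_le.mp H1).1
    have h4 : 2*a*((n:ℝ)/(2*a)*s) = (n:ℝ)*s := by field_simp
    nlinarith
  have HD : 2*a*((n:ℝ)*D) ≤ 2*a + (n:ℝ)*s := by
    rcases abs_cases d with ⟨h, _⟩ | ⟨h, _⟩
    · rw [hD_def, h]; exact H1u
    · rw [hD_def, h]; nlinarith
  have H2' : 2*a*s ≤ (a-1)*(D+s) - s := by
    have h4 : 2*a*((n:ℝ)/(2*a)*((a-1)*(D+s) - s)) = (n:ℝ)*((a-1)*(D+s) - s) := by field_simp
    nlinarith [mul_le_mul_of_nonneg_left H2 (le_of_lt hc2a)]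
  -- key bound on s
  have key0 : (n:ℝ)*s*((2*a+1)*(a+1)) ≤ 2*a*(a-1) := by
    nlinarith [mul_le_mul_of_nonneg_left H2' (by positivity : (0:ℝ) ≤ 2*a*(n:ℝ)),
      mul_le_mul_of_nonneg_left HD (by linarith : (0:ℝ) ≤ a - 1)]
  have key : (n:ℝ)*a*s ≤ a - 1 := by
    nlinarith [key0, hs0, hnR, ha1, mul_nonneg (mul_nonneg hnR.le hs0) (sq_nonneg a)]
  have hna : (0:ℝ) < (n:ℝ)*a := by positivity
  have e1 : 1/(n:ℝ) - 1/((n:ℝ)*a) = (a-1)/((n:ℝ)*a) := by field_simp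
  have e2 : 1/(n:ℝ) + 1/((n:ℝ)*a) = (a+1)/((n:ℝ)*a) := by field_simp
  refine ⟨?_, ?_, ?_⟩
  · rw [e1, le_div_iff₀ hna]
    nlinarith
  · rw [e1, div_le_iff₀ hna]
    nlinarith [mul_le_mul_of_nonneg_left H1l ha0.le]
  · rw [e2, le_div_iff₀ hna]
    nlinarith [mul_le_mul_of_nonneg_left H1u ha0.le]
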